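/- arXiv:0909.4936 — 2 statements merged into one kernel-verified Lean document; each statement's English description precedes it below -/
import Mathlib

section
/- Let (B_n)_{n∈ℤ} and (C_n)_{n∈ℤ} be complex sequences with ∑_{n∈ℤ}|B_n| < ∞ and ∑_{n∈ℤ}|C_n| < ∞, let f^{LT} and f^{TL} be their far-field functions, and let G(θ) = f^{LT}(θ) f^{TL}(−θ) + f^{TL}(θ) f^{LT}(−θ). Then for every real κ > 1, ∑_{m,n∈ℤ} κ^{−|m−n|} B_m C_n = ((κ²−1)/(2π))·∫₀^{π} G(θ)/(1 − 2κ cos θ + κ²) dθ. (First identity of Lemma 1.) -/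
open scoped Real
open MeasureTheory Complex

namespace L1aux

lemma D_lb {κ : ℝ} (hκ : 1 < κ) (θ : ℝ) :
    (κ - 1) ^ 2 ≤ 1 - 2 * κ * Real.cos θ + κ ^ 2 := by
  nlinarith [Real.cos_le_one θ, Real.neg_one_le_cos θ]

lemma D_pos {κ : ℝ} (hκ : 1 < κ) (θ : ℝ) :
    0 < 1 - 2 * κ * Real.cos θ + κ ^ 2 := by
  have := D_lb hκ θ; nlinarith

lemma D_ne {κ : ℝ} (hκ : 1 < κ) (θ : ℝ) :
    ((1 - 2 * κ * Real.cos θ + κ ^ 2 : ℝ) : ℂ) ≠ 0 := by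
  exact_mod_cast Complex.ofReal_ne_zero.2 (ne_of_gt (D_pos hκ θ))

/-- orthogonality -/
lemma ortho (m : ℤ) :
    (∫ θ in (-π : ℝ)..π, Complex.exp ((m : ℂ) * θ * Complex.I))
      = if m = 0 then (2 * π : ℝ) else 0 := by
  rcases eq_or_ne m 0 with h | h
  · simp only [h, if_pos, Int.cast_zero, zero_mul, Complex.exp_zero]
    simp [two_mul]
  · have hc : (m : ℂ) * Complex.I ≠ 0 := by
      simp [Complex.I_ne_zero, h]
    have : (∫ θ in (-π : ℝ)..π, Complex.exp ((m : ℂ) * Complex.I * θ))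
        = (Complex.exp ((m : ℂ) * Complex.I * π) - Complex.exp ((m : ℂ) * Complex.I * (-π : ℝ))) / ((m : ℂ) * Complex.I) :=
      integral_exp_mul_complex hc
    rw [if_neg h]
    have heq : ∀ θ : ℝ, (m : ℂ) * θ * Complex.I = (m : ℂ) * Complex.I * θ := fun θ => by ring
    simp only [heq]
    rw [this]
    have hper : Complex.exp ((m : ℂ) * Complex.I * π) = Complex.exp ((m : ℂ) * Complex.I * (-π : ℝ)) := by
      rw [show ((m:ℂ) * Complex.I * ((π:ℝ):ℂ)) = (m:ℂ)*Complex.I*((-π:ℝ):ℂ) + (m:ℂ)*(2*(π:ℂ))*Complex.I by push_cast; ring,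
        Complex.exp_add, show (m:ℂ)*(2*(π:ℂ))*Complex.I = (m:ℤ)*(2*(π:ℂ)*Complex.I) by push_cast; ring,
        Complex.exp_int_mul_two_pi_mul_I, mul_one]
    rw [hper, sub_self, zero_div]
    norm_num


lemma kernel_hasSum {κ : ℝ} (hκ : 1 < κ) (θ : ℝ) :
    HasSum (fun j : ℤ => ((κ ^ (-(j.natAbs : ℤ)) : ℝ) : ℂ) * Complex.exp ((j : ℂ) * θ * Complex.I))
      (((κ ^ 2 - 1 : ℝ) : ℂ) / ((1 - 2 * κ * Real.cos θ + κ ^ 2 : ℝ) : ℂ)) := by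
  have hκ0 : (0:ℝ) < κ := lt_trans one_pos hκ
  have hκC : (κ : ℂ) ≠ 0 := by exact_mod_cast ne_of_gt hκ0
  set E : ℂ := Complex.exp ((θ : ℂ) * Complex.I) with hE
  have hEne : E ≠ 0 := Complex.exp_ne_zero _
  have hEabs : ‖E‖ = 1 := Complex.norm_exp_ofReal_mul_I θ
  set z : ℂ := E / κ with hz
  set w : ℂ := E⁻¹ / κ with hw
  have hznorm : ‖z‖ < 1 := by
    rw [hz, norm_div]
    simp only [hEabs, Complex.norm_real, Real.norm_eq_abs, abs_of_pos hκ0]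
    rw [one_div]; exact inv_lt_one_of_one_lt₀ hκ
  have hwnorm : ‖w‖ < 1 := by
    rw [hw, norm_div]
    simp only [norm_inv, hEabs, Complex.norm_real, Real.norm_eq_abs, abs_of_pos hκ0]
    rw [inv_one, one_div]; exact inv_lt_one_of_one_lt₀ hκ
  have hz1 : (1 : ℂ) - z ≠ 0 := by
    intro h
    have : z = 1 := by linear_combination -h
    rw [this] at hznorm; simp at hznorm
  have hw1 : (1 : ℂ) - w ≠ 0 := by
    intro h
    have : w = 1 := by linear_combination -h
    rw [this] at hwnorm; simp at hwnorm
  have h1 : HasSum (fun n : ℕ => z ^ n) (1 - z)⁻¹ := hasSum_geometric_of_norm_lt_one hznorm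
  have h2full : HasSum (fun n : ℕ => w ^ n) (1 - w)⁻¹ := hasSum_geometric_of_norm_lt_one hwnorm
  have h2 : HasSum (fun n : ℕ => w ^ (n + 1)) ((1 - w)⁻¹ - 1) := by
    have := (hasSum_nat_add_iff' (f := fun n : ℕ => w ^ n) 1).2 h2full
    simpa using this
  -- identify the terms
  have hterm1 : ∀ n : ℕ, ((κ ^ (-(((n : ℤ)).natAbs : ℤ)) : ℝ) : ℂ)
      * Complex.exp (((n : ℤ) : ℂ) * θ * Complex.I) = z ^ n := by
    intro n
    have : Complex.exp (((n : ℤ) : ℂ) * θ * Complex.I) = E ^ n := by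
      rw [hE, ← Complex.exp_nat_mul]
      push_cast; ring_nf
    rw [this, hz]
    rw [show ((n : ℤ)).natAbs = n from Int.natAbs_natCast n]
    rw [zpow_neg, zpow_natCast]
    push_cast
    rw [div_pow]
    field_simp
  have hterm2 : ∀ n : ℕ, ((κ ^ (-((-((n : ℤ) + 1)).natAbs : ℤ)) : ℝ) : ℂ)
      * Complex.exp ((((-((n : ℤ) + 1)) : ℤ) : ℂ) * θ * Complex.I) = w ^ (n + 1) := by
    intro n
    have hnab : (-((n : ℤ) + 1)).natAbs = n + 1 := by
      omega
    have hexp : Complex.exp ((((-((n : ℤ) + 1)) : ℤ) : ℂ) * θ * Complex.I) = (E⁻¹) ^ (n + 1) := by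
      rw [hE, ← Complex.exp_neg, ← Complex.exp_nat_mul]
      push_cast; ring_nf
    rw [hexp, hnab, hw]
    rw [zpow_neg, zpow_natCast]
    push_cast
    rw [div_pow]
    field_simp
  have hsum : HasSum (fun j : ℤ => ((κ ^ (-(j.natAbs : ℤ)) : ℝ) : ℂ)
      * Complex.exp ((j : ℂ) * θ * Complex.I)) ((1 - z)⁻¹ + ((1 - w)⁻¹ - 1)) := by
    apply HasSum.of_nat_of_neg_add_one
    · exact h1.congr_fun fun n => hterm1 n
    · exact h2.congr_fun fun n => hterm2 n
  convert hsum using 1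
  have hDne : ((1 - 2 * κ * Real.cos θ + κ ^ 2 : ℝ) : ℂ) ≠ 0 := D_ne hκ θ
  have hcos : Complex.cos ((θ : ℝ) : ℂ) = (E + E⁻¹) / 2 := by
    rw [Complex.cos, hE, ← Complex.exp_neg]
    ring_nf
  have hDval : ((1 - 2 * κ * Real.cos θ + κ ^ 2 : ℝ) : ℂ)
      = 1 - 2 * κ * ((E + E⁻¹) / 2) + κ ^ 2 := by
    push_cast
    rw [hcos]
  rw [hDval]
  rw [hz] at hz1
  rw [hw] at hw1
  rw [hz, hw]
  have hDne2 : (1 : ℂ) - 2 * (κ:ℂ) * ((E + E⁻¹) / 2) + (κ:ℂ) ^ 2 ≠ 0 := by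
    rw [← hDval]; exact hDne
  have hA : (κ:ℂ) - E ≠ 0 := by
    intro h
    have hEk : E = (κ:ℂ) := by linear_combination -h
    rw [hEk] at hEabs
    simp only [Complex.norm_real, Real.norm_eq_abs, abs_of_pos hκ0] at hEabs
    linarith
  have hB : (κ:ℂ) * E - 1 ≠ 0 := by
    intro h
    have hEk : (κ:ℂ) * E = 1 := by linear_combination h
    have := congrArg (‖·‖) hEk
    simp only [norm_mul, hEabs, mul_one, Complex.norm_real, Real.norm_eq_abs, abs_of_pos hκ0, norm_one] at this
    linarith
  have hbig : (-((κ:ℂ) * 2) - (κ:ℂ) * E ^ 2 * 2 + (κ:ℂ) ^ 2 * E * 2 + E * 2 : ℂ) ≠ 0 := by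
    have hfac : (-((κ:ℂ) * 2) - (κ:ℂ) * E ^ 2 * 2 + (κ:ℂ) ^ 2 * E * 2 + E * 2 : ℂ)
        = 2 * ((κ:ℂ) - E) * ((κ:ℂ) * E - 1) := by ring
    rw [hfac]
    exact mul_ne_zero (mul_ne_zero two_ne_zero hA) hB
  have hB' : (-1 + (κ:ℂ) * E) ≠ 0 := by
    intro h; exact hB (by linear_combination h)
  push_cast
  field_simp [hA, hB, hbig, hB']
  rw [div_eq_iff (by rw [show (E - (κ:ℂ) * (E ^ 2 + 1) + (κ:ℂ) ^ 2 * E : ℂ) = ((κ:ℂ) - E) * ((κ:ℂ) * E - 1) from by ring]; exact mul_ne_zero hA hB)]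
  ring

lemma coeff_summable {κ : ℝ} (hκ : 1 < κ) :
    Summable (fun j : ℤ => (κ ^ (-(j.natAbs : ℤ)) : ℝ)) := by
  have hκ0 : (0:ℝ) < κ := lt_trans one_pos hκ
  have hgeo : Summable (fun n : ℕ => (κ⁻¹) ^ n) :=
    summable_geometric_of_lt_one (by positivity) (inv_lt_one_of_one_lt₀ hκ)
  have hconv : ∀ n : ℕ, κ ^ (-((n:ℤ))) = (κ⁻¹) ^ n := by
    intro n; rw [zpow_neg, zpow_natCast, inv_pow]
  apply Summable.of_nat_of_neg_add_one
  · refine hgeo.congr fun n => ?_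
    rw [show ((n:ℤ)).natAbs = n from Int.natAbs_natCast n, hconv]
  · refine (hgeo.comp_injective (add_right_injective 1)).congr fun n => ?_
    have : (-((n:ℤ) + 1)).natAbs = n + 1 := by omega
    rw [this, hconv]
    simp [Function.comp]
    ring

noncomputable def Faux (κ : ℝ) (k j : ℤ) (θ : ℝ) : ℂ :=
  ((κ ^ (-(j.natAbs : ℤ)) : ℝ) : ℂ) * Complex.exp (((j + k : ℤ) : ℂ) * θ * Complex.I)

lemma Faux_def (κ : ℝ) (k j : ℤ) (θ : ℝ) :
    Faux κ k j θ = ((κ ^ (-(j.natAbs : ℤ)) : ℝ) : ℂ)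
      * Complex.exp (((j + k : ℤ) : ℂ) * θ * Complex.I) := rfl

set_option maxHeartbeats 1000000 in
lemma key_integral {κ : ℝ} (hκ : 1 < κ) (k : ℤ) :
    (∫ θ in (-π:ℝ)..π, Complex.exp ((k:ℂ) * θ * Complex.I)
        * (((κ ^ 2 - 1 : ℝ) : ℂ) / ((1 - 2 * κ * Real.cos θ + κ ^ 2 : ℝ) : ℂ)))
      = 2 * π * ((κ ^ (-(k.natAbs : ℤ)) : ℝ) : ℂ) := by
  have hκ0 : (0:ℝ) < κ := lt_trans one_pos hκ
  have hle : (-π : ℝ) ≤ π := by linarith [Real.pi_pos]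
  set μ := volume.restrict (Set.Ioc (-π : ℝ) π) with hμ
  set F : ℤ → ℝ → ℂ := Faux κ k with hF
  have hcont : ∀ j : ℤ, Continuous (F j) := by
    intro j
    apply Continuous.mul continuous_const
    apply Complex.continuous_exp.comp
    exact ((continuous_const.mul Complex.continuous_ofReal).mul continuous_const)
  have hint : ∀ j : ℤ, Integrable (F j) μ := fun j => (hcont j).integrableOn_Ioc
  have hnorm : ∀ j : ℤ, ∀ θ : ℝ, ‖F j θ‖ = κ ^ (-(j.natAbs : ℤ)) := by
    intro j θ
    rw [hF, Faux_def]
    simp only [norm_mul, Complex.norm_real, Real.norm_eq_abs]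
    rw [show ((j + k : ℤ) : ℂ) * θ * Complex.I = ((((j + k : ℤ) : ℝ) * θ : ℝ) : ℂ) * Complex.I by
      push_cast; ring]
    rw [Complex.norm_exp_ofReal_mul_I, mul_one, abs_of_pos (by positivity)]
  have hμIoc : (μ Set.univ).toReal = 2 * π := by
    rw [hμ]
    simp [Real.volume_Ioc]
    rw [ENNReal.toReal_ofReal (by linarith [Real.pi_pos])]
    ring
  have hintnorm : ∀ j : ℤ, (∫ θ, ‖F j θ‖ ∂μ) = κ ^ (-(j.natAbs : ℤ)) * (2 * π) := by
    intro j
    rw [show (fun θ => ‖F j θ‖) = fun _ : ℝ => κ ^ (-(j.natAbs : ℤ)) from funext (hnorm j)]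
    rw [integral_const, smul_eq_mul, measureReal_def, hμIoc, mul_comm]
  have hsumnorm : Summable fun j : ℤ => ∫ θ, ‖F j θ‖ ∂μ := by
    simp only [hintnorm]
    exact (coeff_summable hκ).mul_right _
  have hswap := integral_tsum_of_summable_integral_norm hint hsumnorm
  -- identify the pointwise tsum
  have hpt : ∀ θ : ℝ, (∑' j : ℤ, F j θ)
      = Complex.exp ((k:ℂ) * θ * Complex.I)
        * (((κ ^ 2 - 1 : ℝ) : ℂ) / ((1 - 2 * κ * Real.cos θ + κ ^ 2 : ℝ) : ℂ)) := by
    intro θ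
    have h := (kernel_hasSum hκ θ).mul_right (Complex.exp ((k:ℂ) * θ * Complex.I))
    have h2 : HasSum (fun j : ℤ => F j θ)
        ((((κ ^ 2 - 1 : ℝ) : ℂ) / ((1 - 2 * κ * Real.cos θ + κ ^ 2 : ℝ) : ℂ))
          * Complex.exp ((k:ℂ) * θ * Complex.I)) := by
      refine h.congr_fun fun j => ?_
      rw [hF, Faux_def]
      conv_rhs => rw [mul_assoc, ← Complex.exp_add]
      congr 1
      congr 1
      push_cast; ring
    rw [h2.tsum_eq, mul_comm]
  -- compute each integral
  have hival : ∀ j : ℤ, (∫ θ, F j θ ∂μ)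
      = ((κ ^ (-(j.natAbs : ℤ)) : ℝ) : ℂ) * (if j + k = 0 then ((2 * π : ℝ) : ℂ) else 0) := by
    intro j
    rw [hμ, ← intervalIntegral.integral_of_le hle]
    simp only [hF, Faux_def]
    rw [intervalIntegral.integral_const_mul, ortho (j + k)]
    rcases eq_or_ne (j + k) 0 with h | h <;> simp [h]
  have htsum : (∑' j : ℤ, ∫ θ, F j θ ∂μ)
      = ((κ ^ (-(k.natAbs : ℤ)) : ℝ) : ℂ) * ((2 * π : ℝ) : ℂ) := by
    rw [tsum_congr hival]
    have : ∀ j : ℤ, ((κ ^ (-(j.natAbs : ℤ)) : ℝ) : ℂ) * (if j + k = 0 then ((2 * π : ℝ) : ℂ) else 0)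
        = if j = -k then ((κ ^ (-(k.natAbs : ℤ)) : ℝ) : ℂ) * ((2 * π : ℝ) : ℂ) else 0 := by
      intro j
      rcases eq_or_ne j (-k) with rfl | hj
      · simp [Int.natAbs_neg]
      · rw [if_neg hj, if_neg (by omega), mul_zero]
    rw [tsum_congr this, tsum_ite_eq]
  rw [intervalIntegral.integral_of_le hle, ← hμ]
  rw [← integral_congr_ae (Filter.EventuallyEq.of_eq (funext hpt)), ← hswap, htsum]
  push_cast
  ring


lemma cont_inv_D {κ : ℝ} (hκ : 1 < κ) :
    Continuous (fun θ : ℝ => ((1 - 2 * κ * Real.cos θ + κ ^ 2 : ℝ) : ℂ)) := by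
  apply Complex.continuous_ofReal.comp
  continuity

lemma reflect_key {κ : ℝ} (hκ : 1 < κ) (k : ℤ) :
    (∫ θ in (0:ℝ)..π, (Complex.exp ((k:ℂ) * θ * Complex.I)
          + Complex.exp (((-k : ℤ) : ℂ) * θ * Complex.I))
        / ((1 - 2 * κ * Real.cos θ + κ ^ 2 : ℝ) : ℂ))
      = 2 * π * ((κ ^ (-(k.natAbs : ℤ)) : ℝ) : ℂ) / ((κ ^ 2 - 1 : ℝ) : ℂ) := by
  have hκ0 : (0:ℝ) < κ := lt_trans one_pos hκ
  have hc1 : ((κ ^ 2 - 1 : ℝ) : ℂ) ≠ 0 := by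
    rw [Complex.ofReal_ne_zero]; nlinarith
  set D : ℝ → ℂ := fun θ => ((1 - 2 * κ * Real.cos θ + κ ^ 2 : ℝ) : ℂ) with hD
  have hDc : Continuous D := cont_inv_D hκ
  have hDne : ∀ θ, D θ ≠ 0 := fun θ => D_ne hκ θ
  have hfc : ∀ m : ℤ, Continuous (fun θ : ℝ => Complex.exp ((m:ℂ) * θ * Complex.I) / D θ) := by
    intro m
    apply Continuous.div _ hDc hDne
    exact Complex.continuous_exp.comp
      ((continuous_const.mul Complex.continuous_ofReal).mul continuous_const)
  have hii : ∀ (m : ℤ) (a b : ℝ),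
      IntervalIntegrable (fun θ : ℝ => Complex.exp ((m:ℂ) * θ * Complex.I) / D θ) volume a b :=
    fun m a b => (hfc m).intervalIntegrable a b
  have hDeven : ∀ θ : ℝ, D (-θ) = D θ := by
    intro θ; rw [hD]; simp [Real.cos_neg]
  -- reflection
  have hrefl : (∫ θ in (0:ℝ)..π, Complex.exp (((-k : ℤ):ℂ) * θ * Complex.I) / D θ)
      = ∫ θ in (-π:ℝ)..(0:ℝ), Complex.exp ((k:ℂ) * θ * Complex.I) / D θ := by
    have := intervalIntegral.integral_comp_neg
      (fun θ : ℝ => Complex.exp ((k:ℂ) * θ * Complex.I) / D θ) (a := (0:ℝ)) (b := π)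
    rw [neg_zero] at this
    rw [← this]
    apply intervalIntegral.integral_congr
    intro θ _
    simp only []
    rw [hDeven]
    congr 2
    push_cast; ring
  have hsplit : (∫ θ in (-π:ℝ)..π, Complex.exp ((k:ℂ) * θ * Complex.I) / D θ)
      = (∫ θ in (-π:ℝ)..(0:ℝ), Complex.exp ((k:ℂ) * θ * Complex.I) / D θ)
        + ∫ θ in (0:ℝ)..π, Complex.exp ((k:ℂ) * θ * Complex.I) / D θ :=
    (intervalIntegral.integral_add_adjacent_intervals (hii k _ _) (hii k _ _)).symm
  have hfull : (∫ θ in (-π:ℝ)..π, Complex.exp ((k:ℂ) * θ * Complex.I) / D θ)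
      = 2 * π * ((κ ^ (-(k.natAbs : ℤ)) : ℝ) : ℂ) / ((κ ^ 2 - 1 : ℝ) : ℂ) := by
    have hk := key_integral hκ k
    have : (∫ θ in (-π:ℝ)..π, Complex.exp ((k:ℂ) * θ * Complex.I)
        * (((κ ^ 2 - 1 : ℝ) : ℂ) / D θ))
        = ((κ ^ 2 - 1 : ℝ) : ℂ) * ∫ θ in (-π:ℝ)..π, Complex.exp ((k:ℂ) * θ * Complex.I) / D θ := by
      rw [← intervalIntegral.integral_const_mul]
      apply intervalIntegral.integral_congr
      intro θ _
      simp only []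
      ring
    rw [this] at hk
    rw [eq_div_iff hc1]
    linear_combination hk
  calc (∫ θ in (0:ℝ)..π, (Complex.exp ((k:ℂ) * θ * Complex.I)
          + Complex.exp (((-k : ℤ) : ℂ) * θ * Complex.I)) / D θ)
      = (∫ θ in (0:ℝ)..π, Complex.exp ((k:ℂ) * θ * Complex.I) / D θ)
        + ∫ θ in (0:ℝ)..π, Complex.exp (((-k : ℤ):ℂ) * θ * Complex.I) / D θ := by
        rw [← intervalIntegral.integral_add (hii k _ _) (hii (-k) _ _)]
        apply intervalIntegral.integral_congr
        intro θ _
        simp only []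
        rw [add_div]
    _ = (∫ θ in (0:ℝ)..π, Complex.exp ((k:ℂ) * θ * Complex.I) / D θ)
        + ∫ θ in (-π:ℝ)..(0:ℝ), Complex.exp ((k:ℂ) * θ * Complex.I) / D θ := by rw [hrefl]
    _ = ∫ θ in (-π:ℝ)..π, Complex.exp ((k:ℂ) * θ * Complex.I) / D θ := by rw [hsplit]; ring
    _ = _ := hfull


noncomputable def Saux (κ : ℝ) (B C : ℤ → ℂ) (p : ℤ × ℤ) (θ : ℝ) : ℂ :=
  B p.1 * C p.2 *
    ((Complex.exp (((p.1 - p.2 : ℤ) : ℂ) * θ * Complex.I)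
      + Complex.exp (((-(p.1 - p.2) : ℤ) : ℂ) * θ * Complex.I))
      / ((1 - 2 * κ * Real.cos θ + κ ^ 2 : ℝ) : ℂ))

lemma Saux_cont {κ : ℝ} (hκ : 1 < κ) (B C : ℤ → ℂ) (p : ℤ × ℤ) :
    Continuous (Saux κ B C p) := by
  unfold Saux
  apply Continuous.mul continuous_const
  apply Continuous.div _ (cont_inv_D hκ) (fun θ => D_ne hκ θ)
  apply Continuous.add <;>
    exact Complex.continuous_exp.comp
      ((continuous_const.mul Complex.continuous_ofReal).mul continuous_const)

lemma Saux_norm_le {κ : ℝ} (hκ : 1 < κ) (B C : ℤ → ℂ) (p : ℤ × ℤ) (θ : ℝ) :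
    ‖Saux κ B C p θ‖ ≤ ‖B p.1‖ * ‖C p.2‖ * (2 / (κ - 1) ^ 2) := by
  have hκ1 : (0:ℝ) < κ - 1 := by linarith
  have h1 : (0:ℝ) < (κ - 1) ^ 2 := by positivity
  have hDlb := D_lb hκ θ
  have hDpos := D_pos hκ θ
  unfold Saux
  rw [norm_mul, norm_mul, norm_div]
  have habs : ∀ m : ℤ, ‖Complex.exp ((m : ℂ) * θ * Complex.I)‖ = 1 := by
    intro m
    rw [show ((m : ℤ) : ℂ) * θ * Complex.I = (((m : ℝ) * θ : ℝ) : ℂ) * Complex.I by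
      push_cast; ring]
    exact Complex.norm_exp_ofReal_mul_I _
  have hnum : ‖Complex.exp (((p.1 - p.2 : ℤ) : ℂ) * θ * Complex.I)
      + Complex.exp (((-(p.1 - p.2) : ℤ) : ℂ) * θ * Complex.I)‖ ≤ 2 := by
    refine le_trans (norm_add_le _ _) ?_
    rw [habs, habs]; norm_num
  have hden : ‖((1 - 2 * κ * Real.cos θ + κ ^ 2 : ℝ) : ℂ)‖ = 1 - 2 * κ * Real.cos θ + κ ^ 2 := by
    rw [Complex.norm_real, Real.norm_eq_abs, abs_of_pos hDpos]
  have hfrac : ‖Complex.exp (((p.1 - p.2 : ℤ) : ℂ) * θ * Complex.I)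
      + Complex.exp (((-(p.1 - p.2) : ℤ) : ℂ) * θ * Complex.I)‖
        / (1 - 2 * κ * Real.cos θ + κ ^ 2) ≤ 2 / (κ - 1) ^ 2 :=
    div_le_div₀ (by norm_num) hnum h1 hDlb
  rw [hden]
  gcongr

end L1aux

/-- The far-field function of an absolutely summable sequence `a : ℤ → ℂ`:
`f(θ) = ∑_{n ∈ ℤ} a n · e^{i n θ}`. -/
noncomputable def farField (a : ℤ → ℂ) (θ : ℝ) : ℂ :=
  ∑' n : ℤ, a n * Complex.exp ((n : ℂ) * θ * Complex.I)

set_option maxHeartbeats 1000000 in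
/-- First identity of Lemma 1: for absolutely summable sequences `B, C` with far-field
functions `f^{LT}, f^{TL}`, and `G(θ) = f^{LT}(θ) f^{TL}(-θ) + f^{TL}(θ) f^{LT}(-θ)`,
one has, for every `κ > 1`,
`∑_{m,n} κ^{-|m-n|} B_m C_n = ((κ²-1)/(2π)) ∫₀^π G(θ)/(1 - 2κ cos θ + κ²) dθ`. -/
theorem lemma1_first_identity (B C : ℤ → ℂ)
    (hB : Summable fun n : ℤ => ‖B n‖) (hC : Summable fun n : ℤ => ‖C n‖)
    (fLT fTL : ℝ → ℂ) (hfLT : fLT = farField B) (hfTL : fTL = farField C)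
    (G : ℝ → ℂ) (hG : ∀ θ : ℝ, G θ = fLT θ * fTL (-θ) + fTL θ * fLT (-θ))
    (κ : ℝ) (hκ : 1 < κ) :
    ∑' p : ℤ × ℤ, ((κ ^ (-((p.1 - p.2).natAbs : ℤ)) : ℝ) : ℂ) * B p.1 * C p.2
      = (((κ ^ 2 - 1) / (2 * π) : ℝ) : ℂ)
        * ∫ θ in (0 : ℝ)..π, G θ / ((1 - 2 * κ * Real.cos θ + κ ^ 2 : ℝ) : ℂ) := by
  have hκ0 : (0:ℝ) < κ := lt_trans one_pos hκ
  have hπ : (0:ℝ) < π := Real.pi_pos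
  have hc1 : ((κ ^ 2 - 1 : ℝ) : ℂ) ≠ 0 := by
    rw [Complex.ofReal_ne_zero]; nlinarith
  -- norm-summability of the exponential-twisted families
  have habs : ∀ (m : ℤ) (t : ℝ), ‖Complex.exp ((m : ℂ) * t * Complex.I)‖ = 1 := by
    intro m t
    rw [show ((m : ℤ) : ℂ) * t * Complex.I = (((m : ℝ) * t : ℝ) : ℂ) * Complex.I by
      push_cast; ring]
    exact Complex.norm_exp_ofReal_mul_I _
  have hBn : ∀ t : ℝ, Summable fun m : ℤ => ‖B m * Complex.exp ((m : ℂ) * t * Complex.I)‖ := by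
    intro t; refine hB.congr fun m => ?_
    rw [norm_mul, habs, mul_one]
  have hCn : ∀ t : ℝ, Summable fun m : ℤ => ‖C m * Complex.exp ((m : ℂ) * t * Complex.I)‖ := by
    intro t; refine hC.congr fun m => ?_
    rw [norm_mul, habs, mul_one]
  -- pointwise expansion of G θ / D θ
  have hGpt : ∀ θ : ℝ, G θ / ((1 - 2 * κ * Real.cos θ + κ ^ 2 : ℝ) : ℂ)
      = ∑' p : ℤ × ℤ, L1aux.Saux κ B C p θ := by
    intro θ
    have hmθ : ((-θ : ℝ) : ℂ) = -(θ : ℂ) := by push_cast; ring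
    have h1 : fLT θ * fTL (-θ)
        = ∑' p : ℤ × ℤ, (B p.1 * Complex.exp ((p.1 : ℂ) * θ * Complex.I))
            * (C p.2 * Complex.exp ((p.2 : ℂ) * ((-θ : ℝ) : ℂ) * Complex.I)) := by
      rw [hfLT, hfTL]
      exact tsum_mul_tsum_of_summable_norm
        (f := fun m : ℤ => B m * Complex.exp ((m : ℂ) * θ * Complex.I))
        (g := fun m : ℤ => C m * Complex.exp ((m : ℂ) * ((-θ : ℝ) : ℂ) * Complex.I))
        (hBn θ) (hCn (-θ))
    have h2 : fTL θ * fLT (-θ)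
        = ∑' p : ℤ × ℤ, (C p.1 * Complex.exp ((p.1 : ℂ) * θ * Complex.I))
            * (B p.2 * Complex.exp ((p.2 : ℂ) * ((-θ : ℝ) : ℂ) * Complex.I)) := by
      rw [hfLT, hfTL]
      exact tsum_mul_tsum_of_summable_norm
        (f := fun m : ℤ => C m * Complex.exp ((m : ℂ) * θ * Complex.I))
        (g := fun m : ℤ => B m * Complex.exp ((m : ℂ) * ((-θ : ℝ) : ℂ) * Complex.I))
        (hCn θ) (hBn (-θ))
    -- reindex h2 by swapping coordinates
    have h2' : fTL θ * fLT (-θ)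
        = ∑' p : ℤ × ℤ, (C p.2 * Complex.exp ((p.2 : ℂ) * θ * Complex.I))
            * (B p.1 * Complex.exp ((p.1 : ℂ) * ((-θ : ℝ) : ℂ) * Complex.I)) := by
      rw [h2, ← (Equiv.prodComm ℤ ℤ).tsum_eq]
      rfl
    have hterm1 : ∀ p : ℤ × ℤ, (B p.1 * Complex.exp ((p.1 : ℂ) * θ * Complex.I))
            * (C p.2 * Complex.exp ((p.2 : ℂ) * ((-θ : ℝ) : ℂ) * Complex.I))
        = B p.1 * C p.2 * Complex.exp (((p.1 - p.2 : ℤ) : ℂ) * θ * Complex.I) := by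
      intro p
      rw [show (B p.1 * Complex.exp ((p.1 : ℂ) * θ * Complex.I))
            * (C p.2 * Complex.exp ((p.2 : ℂ) * ((-θ : ℝ) : ℂ) * Complex.I))
          = B p.1 * C p.2 * (Complex.exp ((p.1 : ℂ) * θ * Complex.I)
              * Complex.exp ((p.2 : ℂ) * ((-θ : ℝ) : ℂ) * Complex.I)) from by ring,
        ← Complex.exp_add]
      congr 2
      push_cast; ring
    have hterm2 : ∀ p : ℤ × ℤ, (C p.2 * Complex.exp ((p.2 : ℂ) * θ * Complex.I))
            * (B p.1 * Complex.exp ((p.1 : ℂ) * ((-θ : ℝ) : ℂ) * Complex.I))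
        = B p.1 * C p.2 * Complex.exp (((-(p.1 - p.2) : ℤ) : ℂ) * θ * Complex.I) := by
      intro p
      rw [show (C p.2 * Complex.exp ((p.2 : ℂ) * θ * Complex.I))
            * (B p.1 * Complex.exp ((p.1 : ℂ) * ((-θ : ℝ) : ℂ) * Complex.I))
          = B p.1 * C p.2 * (Complex.exp ((p.2 : ℂ) * θ * Complex.I)
              * Complex.exp ((p.1 : ℂ) * ((-θ : ℝ) : ℂ) * Complex.I)) from by ring,
        ← Complex.exp_add]
      congr 2
      push_cast; ring
    have hs1 : Summable fun p : ℤ × ℤ =>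
        (B p.1 * Complex.exp ((p.1 : ℂ) * θ * Complex.I))
          * (C p.2 * Complex.exp ((p.2 : ℂ) * ((-θ : ℝ) : ℂ) * Complex.I)) :=
      summable_mul_of_summable_norm
        (f := fun m : ℤ => B m * Complex.exp ((m : ℂ) * θ * Complex.I))
        (g := fun m : ℤ => C m * Complex.exp ((m : ℂ) * ((-θ : ℝ) : ℂ) * Complex.I))
        (hBn θ) (hCn (-θ))
    have hs2 : Summable fun p : ℤ × ℤ =>
        (C p.2 * Complex.exp ((p.2 : ℂ) * θ * Complex.I))
          * (B p.1 * Complex.exp ((p.1 : ℂ) * ((-θ : ℝ) : ℂ) * Complex.I)) := by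
      have := summable_mul_of_summable_norm
        (f := fun m : ℤ => C m * Complex.exp ((m : ℂ) * θ * Complex.I))
        (g := fun m : ℤ => B m * Complex.exp ((m : ℂ) * ((-θ : ℝ) : ℂ) * Complex.I))
        (hCn θ) (hBn (-θ))
      exact ((Equiv.prodComm ℤ ℤ).summable_iff).2 this
    have hGsum : G θ = ∑' p : ℤ × ℤ,
        (B p.1 * C p.2 * (Complex.exp (((p.1 - p.2 : ℤ) : ℂ) * θ * Complex.I)
          + Complex.exp (((-(p.1 - p.2) : ℤ) : ℂ) * θ * Complex.I))) := by
      rw [hG θ, h1, h2', ← Summable.tsum_add hs1 hs2]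
      refine tsum_congr fun p => ?_
      rw [hterm1 p, hterm2 p]
      ring
    rw [hGsum, ← tsum_div_const]
    refine tsum_congr fun p => ?_
    unfold L1aux.Saux
    ring
  -- swap integral and sum
  have hle : (0:ℝ) ≤ π := hπ.le
  set μ := volume.restrict (Set.Ioc (0:ℝ) π) with hμ
  have hint : ∀ p : ℤ × ℤ, Integrable (L1aux.Saux κ B C p) μ :=
    fun p => (L1aux.Saux_cont hκ B C p).integrableOn_Ioc
  have hμr : (volume (Set.Ioc (0:ℝ) π)).toReal = π := by
    rw [Real.volume_Ioc, sub_zero, ENNReal.toReal_ofReal hle]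
  have hμfin : volume (Set.Ioc (0:ℝ) π) < ⊤ := by
    simp [Real.volume_Ioc]
  have hintnorm : ∀ p : ℤ × ℤ, (∫ θ, ‖L1aux.Saux κ B C p θ‖ ∂μ)
      ≤ ‖B p.1‖ * ‖C p.2‖ * (2 / (κ - 1) ^ 2) * π := by
    intro p
    have hm : AEStronglyMeasurable (fun θ : ℝ => ‖L1aux.Saux κ B C p θ‖)
        (volume.restrict (Set.Ioc (0:ℝ) π)) :=
      ((L1aux.Saux_cont hκ B C p).norm).aestronglyMeasurable
    have key : ‖∫ θ in Set.Ioc (0:ℝ) π, ‖L1aux.Saux κ B C p θ‖‖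
        ≤ (‖B p.1‖ * ‖C p.2‖ * (2 / (κ - 1) ^ 2)) * (volume (Set.Ioc (0:ℝ) π)).toReal := by
      apply MeasureTheory.norm_setIntegral_le_of_norm_le_const hμfin
      intro θ _
      simp only [Real.norm_eq_abs, abs_norm]
      exact L1aux.Saux_norm_le hκ B C p θ
    have h2 : (volume (Set.Ioc (0:ℝ) π)).toReal = π := hμr
    rw [h2] at key
    calc (∫ θ, ‖L1aux.Saux κ B C p θ‖ ∂μ)
        ≤ ‖∫ θ, ‖L1aux.Saux κ B C p θ‖ ∂μ‖ := le_abs_self _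
      _ ≤ ‖B p.1‖ * ‖C p.2‖ * (2 / (κ - 1) ^ 2) * π := key
  have hprodsum : Summable fun p : ℤ × ℤ => ‖B p.1‖ * ‖C p.2‖ * (2 / (κ - 1) ^ 2) * π := by
    apply Summable.mul_right
    apply Summable.mul_right
    exact hB.mul_of_nonneg hC (fun m => norm_nonneg _) (fun n => norm_nonneg _)
  have hsumnorm : Summable fun p : ℤ × ℤ => ∫ θ, ‖L1aux.Saux κ B C p θ‖ ∂μ := by
    apply Summable.of_nonneg_of_le _ hintnorm hprodsum
    intro p
    exact integral_nonneg fun θ => norm_nonneg _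
  have hswap := integral_tsum_of_summable_integral_norm hint hsumnorm
  -- compute each integral
  have hival : ∀ p : ℤ × ℤ, (∫ θ, L1aux.Saux κ B C p θ ∂μ)
      = B p.1 * C p.2 * (2 * π * ((κ ^ (-((p.1 - p.2).natAbs : ℤ)) : ℝ) : ℂ)
          / ((κ ^ 2 - 1 : ℝ) : ℂ)) := by
    intro p
    rw [hμ, ← intervalIntegral.integral_of_le hle]
    unfold L1aux.Saux
    rw [intervalIntegral.integral_const_mul, L1aux.reflect_key hκ (p.1 - p.2)]
  -- assemble
  have hI : (∫ θ in (0 : ℝ)..π, G θ / ((1 - 2 * κ * Real.cos θ + κ ^ 2 : ℝ) : ℂ))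
      = ∑' p : ℤ × ℤ, ∫ θ, L1aux.Saux κ B C p θ ∂μ := by
    rw [intervalIntegral.integral_of_le hle, ← hμ, hswap]
    exact integral_congr_ae (Filter.EventuallyEq.of_eq (funext hGpt))
  rw [hI, ← tsum_mul_left]
  refine tsum_congr fun p => ?_
  rw [hival p]
  have hπC : ((π : ℝ) : ℂ) ≠ 0 := by
    rw [Complex.ofReal_ne_zero]; exact Real.pi_ne_zero
  push_cast
  have hc1' : ((κ : ℂ) ^ 2 - 1) ≠ 0 := by
    intro h
    apply hc1
    push_cast
    linear_combination h
  have hκC : (κ:ℂ) ≠ 0 := by exact_mod_cast ne_of_gt hκ0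
  have hz : (κ:ℂ) ^ (|p.1 - p.2|) ≠ 0 := zpow_ne_zero _ hκC
  have hbig : ((κ:ℂ) ^ (|p.1 - p.2|) * (κ:ℂ) ^ 2 * (π:ℂ) * 2
      - (κ:ℂ) ^ (|p.1 - p.2|) * (π:ℂ) * 2) ≠ 0 := by
    rw [show ((κ:ℂ) ^ (|p.1 - p.2|) * (κ:ℂ) ^ 2 * (π:ℂ) * 2
        - (κ:ℂ) ^ (|p.1 - p.2|) * (π:ℂ) * 2)
      = 2 * (π:ℂ) * (κ:ℂ) ^ (|p.1 - p.2|) * ((κ:ℂ) ^ 2 - 1) from by ring]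
    exact mul_ne_zero (mul_ne_zero (mul_ne_zero two_ne_zero hπC) hz) hc1'
  field_simp [hz, hbig]
end

section
/- Let (B_n)_{n∈ℤ} and (C_n)_{n∈ℤ} be complex sequences, let κ > 1 be real, and assume ∑_{n∈ℤ}|B_n| κ^{|n|} < ∞ and ∑_{n∈ℤ}|C_n| κ^{|n|} < ∞. Let f^{LT} and f^{TL} be the far-field functions of (B_n) and (C_n), and let G(θ) = f^{LT}(θ) f^{TL}(−θ) + f^{TL}(θ) f^{LT}(−θ). Then the limit as N → ∞ of (κ^N/π)·∫₀^{π} G(θ)·(κ cos((N−1)θ) − cos(Nθ))/(1 − 2κ cos θ + κ²) dθ exists and equals ∑_{m,n∈ℤ} κ^{−|m−n|} B_m C_n + ∑_{m,n∈ℤ} κ^{|m−n|} B_m C_n. (Second identity of Lemma 1; note the limit cannot be interchanged with the integral.) -/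
open scoped Real
open Filter MeasureTheory Complex intervalIntegral

lemma integral_cos_int (m : ℤ) :
    ∫ θ in (0:ℝ)..π, Real.cos ((m:ℝ) * θ) = if m = 0 then π else 0 := by
  rcases eq_or_ne m 0 with h | h
  · simp [h]
  · have hm : (m:ℝ) ≠ 0 := Int.cast_ne_zero.mpr h
    rw [if_neg h, intervalIntegral.integral_comp_mul_left (fun x => Real.cos x) hm]
    simp [integral_cos, Real.sin_int_mul_pi]

lemma integral_two_cos_mul_cos (k c : ℤ) :
    (∫ θ in (0:ℝ)..π, 2 * Real.cos ((k:ℝ) * θ) * Real.cos ((c:ℝ) * θ))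
      = (if c = k then π else 0) + (if c = -k then π else 0) := by
  have h : ∀ θ:ℝ, 2 * Real.cos ((k:ℝ)*θ) * Real.cos ((c:ℝ)*θ)
      = Real.cos (((k+c:ℤ):ℝ)*θ) + Real.cos (((k-c:ℤ):ℝ)*θ) := by
    intro θ
    push_cast
    rw [add_mul, sub_mul, Real.cos_add, Real.cos_sub]; ring
  have hi : ∀ m : ℤ, IntervalIntegrable (fun θ => Real.cos ((m:ℝ)*θ)) MeasureTheory.volume 0 π :=
    fun m => (Real.continuous_cos.comp (continuous_const.mul continuous_id)).intervalIntegrable _ _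
  simp_rw [h]
  rw [intervalIntegral.integral_add (hi _) (hi _), integral_cos_int, integral_cos_int]
  have h1 : (k + c = 0) ↔ (c = -k) := by omega
  have h2 : (k - c = 0) ↔ (c = k) := by omega
  simp only [h1, h2]
  ring


lemma kernel_hasSum (κ : ℝ) (hκ : 1 < κ) (N : ℕ) (θ : ℝ) :
    HasSum (fun i : ℕ => κ ^ ((N:ℤ) - 1 - i) * Real.cos ((((N:ℤ) - 1 - i : ℤ) : ℝ) * θ))
      (κ ^ N * (κ * Real.cos (((N:ℝ) - 1) * θ) - Real.cos ((N:ℝ) * θ))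
        / (1 - 2 * κ * Real.cos θ + κ ^ 2)) := by
  have hκ0 : (0:ℝ) < κ := lt_trans one_pos hκ
  set z : ℂ := Complex.exp (θ * I) with hz
  set a : ℂ := (κ:ℂ) * z with ha
  have hzn : ‖z‖ = 1 := Complex.norm_exp_ofReal_mul_I θ
  have han : ‖a‖ = κ := by
    rw [ha, norm_mul, hzn, mul_one, Complex.norm_real, Real.norm_eq_abs, abs_of_pos hκ0]
  have ha0 : a ≠ 0 := by
    intro h; rw [h] at han; simp at han; linarith
  have ha1 : a ≠ 1 := by
    intro h; rw [h] at han; simp at han; linarith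
  have hainv : ‖a⁻¹‖ < 1 := by
    rw [norm_inv, han, inv_lt_one_iff₀]
    right; exact hκ
  have h1 : HasSum (fun i : ℕ => a⁻¹ ^ i) (1 - a⁻¹)⁻¹ := hasSum_geometric_of_norm_lt_one hainv
  have h2 := h1.mul_left (a ^ ((N:ℤ) - 1))
  have hterm : ∀ i : ℕ, a ^ ((N:ℤ) - 1) * a⁻¹ ^ i = a ^ ((N:ℤ) - 1 - i) := by
    intro i
    rw [inv_pow, ← zpow_natCast a i, ← zpow_neg, ← zpow_add₀ ha0]
    congr 1
  have hsumval : a ^ ((N:ℤ) - 1) * (1 - a⁻¹)⁻¹ = a ^ N / (a - 1) := by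
    have hadd : a - 1 ≠ 0 := sub_ne_zero.mpr ha1
    rw [zpow_sub₀ ha0, zpow_one, zpow_natCast]
    field_simp
  rw [hsumval] at h2
  have h3 : HasSum (fun i : ℕ => a ^ ((N:ℤ) - 1 - i)) (a ^ N / (a - 1)) := by
    exact h2.congr_fun fun i => (hterm i).symm
  -- denominator facts
  have hD0 : (1 - 2 * κ * Real.cos θ + κ ^ 2) ≠ 0 := by
    have h := Real.cos_le_one θ
    nlinarith
  -- conjugate-type element
  set zb : ℂ := Complex.exp ((-θ : ℝ) * I) with hzb
  have hzz : z * zb = 1 := by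
    rw [hz, hzb, ← Complex.exp_add]
    norm_num
  have hcos : z + zb = ((2 * Real.cos θ : ℝ) : ℂ) := by
    rw [hz, hzb]
    apply Complex.ext
    · rw [Complex.add_re, Complex.exp_ofReal_mul_I_re, Complex.exp_ofReal_mul_I_re,
        Real.cos_neg, Complex.ofReal_re]
      ring
    · rw [Complex.add_im, Complex.exp_ofReal_mul_I_im, Complex.exp_ofReal_mul_I_im,
        Real.sin_neg, Complex.ofReal_im]
      ring
  have hcos' : z + zb = 2 * Complex.cos (θ : ℂ) := by
    rw [hcos]
    push_cast
    ring
  have hden : (a - 1) * ((κ:ℂ) * zb - 1) = ((1 - 2 * κ * Real.cos θ + κ ^ 2 : ℝ) : ℂ) := by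
    rw [ha]
    push_cast
    linear_combination (κ:ℂ)^2 * hzz - (κ:ℂ) * hcos'
  have hzN : z ^ N = Complex.exp ((((N:ℝ) * θ : ℝ) : ℂ) * I) := by
    rw [hz, ← Complex.exp_nat_mul]
    congr 1
    push_cast
    ring
  have hzN1 : z ^ N * zb = Complex.exp (((((N:ℝ) - 1) * θ : ℝ) : ℂ) * I) := by
    rw [hzN, hzb, ← Complex.exp_add]
    congr 1
    push_cast
    ring
  have hnum : a ^ N * ((κ:ℂ) * zb - 1)
      = ((κ ^ N : ℝ) : ℂ) * ((κ:ℂ) * Complex.exp (((((N:ℝ) - 1) * θ : ℝ) : ℂ) * I)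
          - Complex.exp ((((N:ℝ) * θ : ℝ) : ℂ) * I)) := by
    rw [← hzN1, ← hzN, ha, mul_pow]
    push_cast
    ring
  have key : a ^ N / (a - 1)
      = ((κ ^ N : ℝ) : ℂ) * ((κ:ℂ) * Complex.exp (((((N:ℝ) - 1) * θ : ℝ) : ℂ) * I)
          - Complex.exp ((((N:ℝ) * θ : ℝ) : ℂ) * I))
        / ((1 - 2 * κ * Real.cos θ + κ ^ 2 : ℝ) : ℂ) := by
    have hD0' : ((1 - 2 * κ * Real.cos θ + κ ^ 2 : ℝ) : ℂ) ≠ 0 := by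
      exact_mod_cast Complex.ofReal_ne_zero.mpr hD0
    have ha1' : a - 1 ≠ 0 := sub_ne_zero.mpr ha1
    rw [div_eq_div_iff ha1' hD0', ← hden, ← hnum]
    ring
  have hre : (a ^ N / (a - 1)).re
      = κ ^ N * (κ * Real.cos (((N:ℝ) - 1) * θ) - Real.cos ((N:ℝ) * θ))
        / (1 - 2 * κ * Real.cos θ + κ ^ 2) := by
    rw [key, div_eq_mul_inv, ← Complex.ofReal_inv, mul_comm, Complex.re_ofReal_mul,
      Complex.re_ofReal_mul]
    simp only [Complex.sub_re, Complex.re_ofReal_mul, Complex.exp_ofReal_mul_I_re]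
    field_simp
  have hterm_re : ∀ i : ℕ, (a ^ ((N:ℤ) - 1 - i)).re
      = κ ^ ((N:ℤ) - 1 - i) * Real.cos ((((N:ℤ) - 1 - i : ℤ) : ℝ) * θ) := by
    intro i
    set c : ℤ := (N:ℤ) - 1 - i with hc
    have h5 : z ^ c = Complex.exp (((c * θ : ℝ) : ℂ) * I) := by
      rw [hz, ← Complex.exp_int_mul]
      congr 1
      push_cast
      ring
    rw [ha, mul_zpow, ← Complex.ofReal_zpow, h5, Complex.re_ofReal_mul,
      Complex.exp_ofReal_mul_I_re]
  have h4 := Complex.hasSum_re h3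
  rw [hre] at h4
  exact h4.congr_fun fun i => (hterm_re i).symm


lemma aux_hasSum_ite (κ : ℝ) (N : ℕ) (k : ℤ) (v : ℝ) :
    HasSum (fun i : ℕ => if (N:ℤ) - 1 - i = k then v else 0)
      (if k ≤ (N:ℤ) - 1 then v else 0) := by
  rcases le_or_gt k ((N:ℤ) - 1) with h | h
  · rw [if_pos h]
    have heq : ∀ i : ℕ, (((N:ℤ) - 1 - i = k)) ↔ (i = ((N:ℤ) - 1 - k).toNat) := by
      intro i; omega
    simp_rw [heq]
    exact hasSum_ite_eq _ _
  · rw [if_neg (not_le.mpr h)]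
    convert hasSum_zero with i
    rw [if_neg (by omega)]

lemma integral_cos_kernel (κ : ℝ) (hκ : 1 < κ) (N : ℕ) (k : ℤ) :
    (∫ θ in (0:ℝ)..π, 2 * Real.cos ((k:ℝ) * θ) *
      (κ ^ N * (κ * Real.cos (((N:ℝ) - 1) * θ) - Real.cos ((N:ℝ) * θ))
        / (1 - 2 * κ * Real.cos θ + κ ^ 2)))
    = π * ((if k ≤ (N:ℤ) - 1 then κ ^ k else 0) + (if -k ≤ (N:ℤ) - 1 then κ ^ (-k) else 0)) := by
  have hκ0 : (0:ℝ) < κ := lt_trans one_pos hκ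
  set μ := MeasureTheory.volume.restrict (Set.Ioc (0:ℝ) π) with hμ
  set F : ℕ → ℝ → ℝ := fun i θ =>
    2 * Real.cos ((k:ℝ) * θ) * (κ ^ ((N:ℤ) - 1 - i) * Real.cos ((((N:ℤ) - 1 - i : ℤ) : ℝ) * θ))
    with hF
  have hFc : ∀ i, Continuous (F i) := by
    intro i
    exact (continuous_const.mul (Real.continuous_cos.comp (continuous_const.mul continuous_id))).mul
      (continuous_const.mul (Real.continuous_cos.comp (continuous_const.mul continuous_id)))
  have hμπ : (MeasureTheory.volume (Set.Ioc (0:ℝ) π)).toReal = π := by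
    rw [Real.volume_Ioc, ENNReal.toReal_ofReal (by simp [Real.pi_pos.le])]
    simp
  have hFb : ∀ i (θ : ℝ), ‖F i θ‖ ≤ 2 * κ ^ ((N:ℤ) - 1 - i) := by
    intro i θ
    have h1 : |Real.cos ((k:ℝ) * θ)| ≤ 1 := Real.abs_cos_le_one _
    have h2 : |Real.cos ((((N:ℤ) - 1 - i : ℤ) : ℝ) * θ)| ≤ 1 := Real.abs_cos_le_one _
    have h3 : (0:ℝ) < κ ^ ((N:ℤ) - 1 - i) := zpow_pos hκ0 _
    rw [hF, Real.norm_eq_abs, abs_mul, abs_mul, abs_mul, _root_.abs_two, abs_of_pos h3]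
    have hprod : |Real.cos ((k:ℝ) * θ)| * |Real.cos ((((N:ℤ) - 1 - i : ℤ) : ℝ) * θ)| ≤ 1 :=
      mul_le_one₀ h1 (abs_nonneg _) h2
    nlinarith [abs_nonneg (Real.cos ((k:ℝ) * θ)), abs_nonneg (Real.cos ((((N:ℤ) - 1 - i : ℤ) : ℝ) * θ))]
  have hFint : ∀ i, MeasureTheory.Integrable (F i) μ := by
    intro i
    exact (hFc i).integrableOn_Ioc
  have hIb : ∀ i, (∫ θ, ‖F i θ‖ ∂μ) ≤ 2 * π * κ ^ ((N:ℤ) - 1) * (κ⁻¹) ^ i := by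
    intro i
    have hint : MeasureTheory.Integrable (fun _ : ℝ => 2 * κ ^ ((N:ℤ) - 1 - i)) μ :=
      MeasureTheory.integrableOn_const (by rw [Real.volume_Ioc]; exact ENNReal.ofReal_ne_top)
    have := MeasureTheory.integral_mono_of_nonneg
      (Filter.Eventually.of_forall (fun θ => norm_nonneg (F i θ))) hint
      (Filter.Eventually.of_forall (fun θ => hFb i θ))
    calc (∫ θ, ‖F i θ‖ ∂μ) ≤ ∫ _, 2 * κ ^ ((N:ℤ) - 1 - i) ∂μ := this
      _ = (2 * κ ^ ((N:ℤ) - 1 - i)) * π := by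
          rw [hμ, MeasureTheory.setIntegral_const, smul_eq_mul, MeasureTheory.measureReal_def, hμπ, mul_comm]
      _ = 2 * π * κ ^ ((N:ℤ) - 1) * (κ⁻¹) ^ i := by
          rw [sub_eq_add_neg ((N:ℤ) - 1), zpow_add₀ (ne_of_gt hκ0), zpow_neg, zpow_natCast, inv_pow]
          ring
  have hsummable : Summable (fun i : ℕ => ∫ θ, ‖F i θ‖ ∂μ) := by
    refine Summable.of_nonneg_of_le (fun i => MeasureTheory.integral_nonneg (fun θ => norm_nonneg _))
      (fun i => hIb i) ?_
    have hg : Summable (fun i : ℕ => (κ⁻¹) ^ i) := by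
      apply summable_geometric_of_lt_one (by positivity)
      rw [inv_lt_one_iff₀]; right; exact hκ
    exact hg.mul_left _
  have HS1 := MeasureTheory.hasSum_integral_of_summable_integral_norm hFint hsummable
  -- identify the integral of the tsum
  have htsum : ∀ θ : ℝ, (∑' i, F i θ)
      = 2 * Real.cos ((k:ℝ) * θ) *
        (κ ^ N * (κ * Real.cos (((N:ℝ) - 1) * θ) - Real.cos ((N:ℝ) * θ))
          / (1 - 2 * κ * Real.cos θ + κ ^ 2)) := by
    intro θ
    exact ((kernel_hasSum κ hκ N θ).mul_left (2 * Real.cos ((k:ℝ) * θ))).tsum_eq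
  have hIval : ∀ i, (∫ θ, F i θ ∂μ)
      = κ ^ ((N:ℤ) - 1 - i) *
        ((if ((N:ℤ) - 1 - i) = k then π else 0) + (if ((N:ℤ) - 1 - i) = -k then π else 0)) := by
    intro i
    have : ∀ θ : ℝ, F i θ = κ ^ ((N:ℤ) - 1 - i) *
        (2 * Real.cos ((k:ℝ) * θ) * Real.cos ((((N:ℤ) - 1 - i : ℤ) : ℝ) * θ)) := by
      intro θ; rw [hF]; ring
    simp_rw [this]
    rw [hμ, ← intervalIntegral.integral_of_le Real.pi_pos.le,
      intervalIntegral.integral_const_mul, integral_two_cos_mul_cos]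
  -- second computation of the sum
  have HS2 : HasSum (fun i => ∫ θ, F i θ ∂μ)
      (π * ((if k ≤ (N:ℤ) - 1 then κ ^ k else 0) + (if -k ≤ (N:ℤ) - 1 then κ ^ (-k) else 0))) := by
    have e1 : ∀ i : ℕ, κ ^ ((N:ℤ) - 1 - i) * (if ((N:ℤ) - 1 - i) = k then π else 0)
        = (if ((N:ℤ) - 1 - i) = k then κ ^ k * π else 0) := by
      intro i
      by_cases h : ((N:ℤ) - 1 - i) = k
      · rw [if_pos h, if_pos h, h]
      · rw [if_neg h, if_neg h, mul_zero]
    have e2 : ∀ i : ℕ, κ ^ ((N:ℤ) - 1 - i) * (if ((N:ℤ) - 1 - i) = -k then π else 0)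
        = (if ((N:ℤ) - 1 - i) = -k then κ ^ (-k) * π else 0) := by
      intro i
      by_cases h : ((N:ℤ) - 1 - i) = -k
      · rw [if_pos h, if_pos h, h]
      · rw [if_neg h, if_neg h, mul_zero]
    have H := (aux_hasSum_ite κ N k (κ ^ k * π)).add (aux_hasSum_ite κ N (-k) (κ ^ (-k) * π))
    have : HasSum (fun i => ∫ θ, F i θ ∂μ)
        ((if k ≤ (N:ℤ) - 1 then κ ^ k * π else 0) + (if -k ≤ (N:ℤ) - 1 then κ ^ (-k) * π else 0)) := by
      refine H.congr_fun ?_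
      intro i
      rw [hIval i, mul_add, e1 i, e2 i]
    convert this using 1
    rcases le_or_gt k ((N:ℤ) - 1) with h | h <;> rcases le_or_gt (-k) ((N:ℤ) - 1) with h' | h' <;>
      simp [h, h', not_le.mpr, mul_comm] <;> ring
  rw [intervalIntegral.integral_of_le Real.pi_pos.le]
  have := HS1.unique HS2
  rw [← this]
  exact MeasureTheory.integral_congr_ae (Filter.Eventually.of_forall (fun θ => (htsum θ).symm))



lemma exp_int_form (k : ℤ) (x : ℝ) :
    ((k:ℂ) * x * Complex.I) = (((k:ℝ) * x : ℝ) : ℂ) * Complex.I := by push_cast; ring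

lemma abs_exp_int (k : ℤ) (x : ℝ) : ‖Complex.exp ((k:ℂ) * x * Complex.I)‖ = 1 := by
  rw [exp_int_form, Complex.norm_exp_ofReal_mul_I]

lemma exp_pair_eq (k : ℤ) (θ : ℝ) :
    Complex.exp ((k:ℂ) * θ * Complex.I) + Complex.exp (((-k : ℤ):ℂ) * θ * Complex.I)
      = ((2 * Real.cos ((k:ℝ) * θ) : ℝ) : ℂ) := by
  have h2 : (((-k:ℤ):ℂ) * θ * Complex.I) = ((-((k:ℝ) * θ) : ℝ) : ℂ) * Complex.I := by
    push_cast; ring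
  rw [exp_int_form, h2]
  apply Complex.ext
  · rw [Complex.add_re, Complex.exp_ofReal_mul_I_re, Complex.exp_ofReal_mul_I_re,
      Real.cos_neg, Complex.ofReal_re]
    ring
  · rw [Complex.add_im, Complex.exp_ofReal_mul_I_im, Complex.exp_ofReal_mul_I_im,
      Real.sin_neg, Complex.ofReal_im]
    ring

lemma cont_exp_int (k : ℤ) : Continuous fun θ : ℝ => Complex.exp ((k:ℂ) * (θ:ℂ) * Complex.I) :=
  Complex.continuous_exp.comp ((continuous_const.mul Complex.continuous_ofReal).mul continuous_const)

lemma farField_hasSum (a : ℤ → ℂ) (ha : Summable fun n => ‖a n‖) (x : ℝ) :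
    HasSum (fun n : ℤ => a n * Complex.exp ((n:ℂ) * x * Complex.I)) (farField a x) := by
  have hs : Summable (fun n : ℤ => a n * Complex.exp ((n:ℂ) * x * Complex.I)) := by
    apply Summable.of_norm
    refine ha.congr fun n => ?_
    rw [norm_mul, abs_exp_int, mul_one]
  exact hs.hasSum

lemma norm_summable_terms (a : ℤ → ℂ) (ha : Summable fun n => ‖a n‖) (x : ℝ) :
    Summable (fun n : ℤ => ‖a n * Complex.exp ((n:ℂ) * x * Complex.I)‖) := by
  refine ha.congr fun n => ?_
  rw [norm_mul, abs_exp_int, mul_one]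

lemma G_hasSum (B C : ℤ → ℂ) (hB1 : Summable fun n => ‖B n‖) (hC1 : Summable fun n => ‖C n‖)
    (θ : ℝ) :
    HasSum (fun p : ℤ × ℤ => B p.1 * C p.2 *
        (Complex.exp (((p.1 - p.2 : ℤ):ℂ) * θ * Complex.I)
          + Complex.exp (((p.2 - p.1 : ℤ):ℂ) * θ * Complex.I)))
      (farField B θ * farField C (-θ) + farField C θ * farField B (-θ)) := by
  have hexpadd : ∀ m n : ℤ, Complex.exp ((m:ℂ) * θ * Complex.I)
      * Complex.exp ((n:ℂ) * (-θ : ℝ) * Complex.I)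
      = Complex.exp (((m - n : ℤ):ℂ) * θ * Complex.I) := by
    intro m n
    rw [← Complex.exp_add]
    congr 1
    push_cast
    ring
  have h1 : HasSum (fun p : ℤ × ℤ =>
      (B p.1 * Complex.exp ((p.1:ℂ) * θ * Complex.I))
        * (C p.2 * Complex.exp ((p.2:ℂ) * (-θ : ℝ) * Complex.I)))
      (farField B θ * farField C (-θ)) := by
    have hs := summable_mul_of_summable_norm (norm_summable_terms B hB1 θ)
      (norm_summable_terms C hC1 (-θ))
    have he := tsum_mul_tsum_of_summable_norm (norm_summable_terms B hB1 θ)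
      (norm_summable_terms C hC1 (-θ))
    rw [farField, farField, he]
    exact hs.hasSum
  have h2 : HasSum (fun p : ℤ × ℤ =>
      (C p.1 * Complex.exp ((p.1:ℂ) * θ * Complex.I))
        * (B p.2 * Complex.exp ((p.2:ℂ) * (-θ : ℝ) * Complex.I)))
      (farField C θ * farField B (-θ)) := by
    have hs := summable_mul_of_summable_norm (norm_summable_terms C hC1 θ)
      (norm_summable_terms B hB1 (-θ))
    have he := tsum_mul_tsum_of_summable_norm (norm_summable_terms C hC1 θ)
      (norm_summable_terms B hB1 (-θ))
    rw [farField, farField, he]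
    exact hs.hasSum
  have h1' : HasSum (fun p : ℤ × ℤ => B p.1 * C p.2
      * Complex.exp (((p.1 - p.2 : ℤ):ℂ) * θ * Complex.I)) (farField B θ * farField C (-θ)) := by
    refine h1.congr_fun fun p => ?_
    rw [← hexpadd p.1 p.2]
    ring
  have h2' : HasSum (fun p : ℤ × ℤ => B p.1 * C p.2
      * Complex.exp (((p.2 - p.1 : ℤ):ℂ) * θ * Complex.I)) (farField C θ * farField B (-θ)) := by
    have h2s := ((Equiv.prodComm ℤ ℤ).hasSum_iff).mpr h2
    refine h2s.congr_fun fun p => ?_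
    simp only [Equiv.prodComm_apply, Function.comp_apply, Prod.fst_swap, Prod.snd_swap]
    rw [← hexpadd p.2 p.1]
    ring
  have := h1'.add h2'
  refine this.congr_fun fun p => ?_
  ring


lemma integral_G_kernel (B C : ℤ → ℂ) (κ : ℝ) (hκ : 1 < κ)
    (hB1 : Summable fun n => ‖B n‖) (hC1 : Summable fun n => ‖C n‖) (N : ℕ) :
    (∫ θ in (0:ℝ)..π, (farField B θ * farField C (-θ) + farField C θ * farField B (-θ))
        * ((κ ^ N * (κ * Real.cos (((N:ℝ) - 1) * θ) - Real.cos ((N:ℝ) * θ))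
          / (1 - 2 * κ * Real.cos θ + κ ^ 2) : ℝ) : ℂ))
    = ∑' p : ℤ × ℤ, B p.1 * C p.2 *
        ((π * ((if p.1 - p.2 ≤ (N:ℤ) - 1 then κ ^ (p.1 - p.2) else 0)
          + (if -(p.1 - p.2) ≤ (N:ℤ) - 1 then κ ^ (-(p.1 - p.2)) else 0)) : ℝ) : ℂ) := by
  have hκ0 : (0:ℝ) < κ := lt_trans one_pos hκ
  set μ := MeasureTheory.volume.restrict (Set.Ioc (0:ℝ) π) with hμ
  set Ker : ℝ → ℝ := fun θ => κ ^ N * (κ * Real.cos (((N:ℝ) - 1) * θ) - Real.cos ((N:ℝ) * θ))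
      / (1 - 2 * κ * Real.cos θ + κ ^ 2) with hKer
  set MK : ℝ := ∑' i : ℕ, κ ^ ((N:ℤ) - 1 - i) with hMK
  have hgeo : Summable (fun i : ℕ => κ ^ ((N:ℤ) - 1 - i)) := by
    have hg : Summable (fun i : ℕ => (κ⁻¹) ^ i) := by
      apply summable_geometric_of_lt_one (by positivity)
      rw [inv_lt_one_iff₀]; right; exact hκ
    refine (hg.mul_left (κ ^ ((N:ℤ) - 1))).congr fun i => ?_
    rw [sub_eq_add_neg ((N:ℤ) - 1), zpow_add₀ (ne_of_gt hκ0), zpow_neg, zpow_natCast, inv_pow]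
  have hMK0 : 0 ≤ MK := tsum_nonneg fun i => le_of_lt (zpow_pos hκ0 _)
  have hKb : ∀ θ : ℝ, |Ker θ| ≤ MK := by
    intro θ
    have hs := kernel_hasSum κ hκ N θ
    rw [hKer]
    simp only
    rw [← hs.tsum_eq, hMK]
    have h1 : ‖∑' i : ℕ, κ ^ ((N:ℤ) - 1 - i) * Real.cos ((((N:ℤ) - 1 - i : ℤ):ℝ) * θ)‖
        ≤ ∑' i : ℕ, ‖κ ^ ((N:ℤ) - 1 - i) * Real.cos ((((N:ℤ) - 1 - i : ℤ):ℝ) * θ)‖ := by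
      apply norm_tsum_le_tsum_norm
      refine Summable.of_nonneg_of_le (fun i => norm_nonneg _) (fun i => ?_) hgeo
      rw [Real.norm_eq_abs, abs_mul, abs_of_pos (zpow_pos hκ0 _)]
      have := Real.abs_cos_le_one ((((N:ℤ) - 1 - i : ℤ):ℝ) * θ)
      nlinarith [zpow_pos hκ0 ((N:ℤ) - 1 - (i:ℤ))]
    rw [← Real.norm_eq_abs]
    refine le_trans h1 (Summable.tsum_le_tsum (fun i => ?_) ?_ hgeo)
    · rw [Real.norm_eq_abs, abs_mul, abs_of_pos (zpow_pos hκ0 _)]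
      have := Real.abs_cos_le_one ((((N:ℤ) - 1 - i : ℤ):ℝ) * θ)
      nlinarith [zpow_pos hκ0 ((N:ℤ) - 1 - (i:ℤ))]
    · refine Summable.of_nonneg_of_le (fun i => norm_nonneg _) (fun i => ?_) hgeo
      rw [Real.norm_eq_abs, abs_mul, abs_of_pos (zpow_pos hκ0 _)]
      have := Real.abs_cos_le_one ((((N:ℤ) - 1 - i : ℤ):ℝ) * θ)
      nlinarith [zpow_pos hκ0 ((N:ℤ) - 1 - (i:ℤ))]
  have hDne : ∀ θ : ℝ, (1 - 2 * κ * Real.cos θ + κ ^ 2) ≠ 0 := by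
    intro θ
    have h := Real.cos_le_one θ
    nlinarith
  have hKerc : Continuous Ker := by
    apply Continuous.div
    · exact continuous_const.mul ((continuous_const.mul
        (Real.continuous_cos.comp (continuous_const.mul continuous_id))).sub
        (Real.continuous_cos.comp (continuous_const.mul continuous_id)))
    · exact (continuous_const.sub (continuous_const.mul Real.continuous_cos)).add continuous_const
    · exact hDne
  set Fc : ℤ × ℤ → ℝ → ℂ := fun p θ => B p.1 * C p.2 *
      (Complex.exp (((p.1 - p.2 : ℤ):ℂ) * θ * Complex.I)
        + Complex.exp (((p.2 - p.1 : ℤ):ℂ) * θ * Complex.I)) * ((Ker θ : ℝ) : ℂ) with hFc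
  have hFcont : ∀ p, Continuous (Fc p) := by
    intro p
    exact (continuous_const.mul ((cont_exp_int (p.1 - p.2)).add (cont_exp_int (p.2 - p.1)))).mul
      (Complex.continuous_ofReal.comp hKerc)
  have hFint : ∀ p, MeasureTheory.Integrable (Fc p) μ := fun p => (hFcont p).integrableOn_Ioc
  have hFb : ∀ p (θ : ℝ), ‖Fc p θ‖ ≤ ‖B p.1‖ * ‖C p.2‖ * (2 * MK) := by
    intro p θ
    rw [hFc]
    simp only
    rw [norm_mul, norm_mul, norm_mul]
    have he : ‖Complex.exp (((p.1 - p.2 : ℤ):ℂ) * θ * Complex.I)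
        + Complex.exp (((p.2 - p.1 : ℤ):ℂ) * θ * Complex.I)‖ ≤ 2 := by
      refine le_trans (norm_add_le _ _) ?_
      rw [abs_exp_int, abs_exp_int]
      norm_num
    have hk : ‖((Ker θ : ℝ) : ℂ)‖ ≤ MK := by
      rw [Complex.norm_real, Real.norm_eq_abs]
      exact hKb θ
    have hn1 : (0:ℝ) ≤ ‖B p.1‖ * ‖C p.2‖ := by positivity
    calc ‖B p.1‖ * ‖C p.2‖ * ‖_ + _‖ * ‖((Ker θ : ℝ) : ℂ)‖
        ≤ ‖B p.1‖ * ‖C p.2‖ * 2 * MK := by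
          apply mul_le_mul (by exact mul_le_mul_of_nonneg_left he hn1) hk (norm_nonneg _)
          positivity
      _ = ‖B p.1‖ * ‖C p.2‖ * (2 * MK) := by ring
  have hμπ : (MeasureTheory.volume (Set.Ioc (0:ℝ) π)).toReal = π := by
    rw [Real.volume_Ioc, ENNReal.toReal_ofReal (by simp [Real.pi_pos.le])]
    simp
  have hIb : ∀ p, (∫ θ, ‖Fc p θ‖ ∂μ) ≤ ‖B p.1‖ * ‖C p.2‖ * (2 * MK) * π := by
    intro p
    have hint : MeasureTheory.Integrable (fun _ : ℝ => ‖B p.1‖ * ‖C p.2‖ * (2 * MK)) μ :=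
      MeasureTheory.integrableOn_const
        (by rw [Real.volume_Ioc]; exact ENNReal.ofReal_ne_top)
    have h := MeasureTheory.integral_mono_of_nonneg
      (Filter.Eventually.of_forall (fun θ => norm_nonneg (Fc p θ))) hint
      (Filter.Eventually.of_forall (fun θ => hFb p θ))
    calc (∫ θ, ‖Fc p θ‖ ∂μ) ≤ ∫ _, ‖B p.1‖ * ‖C p.2‖ * (2 * MK) ∂μ := h
      _ = ‖B p.1‖ * ‖C p.2‖ * (2 * MK) * π := by
          rw [hμ, MeasureTheory.setIntegral_const, smul_eq_mul, MeasureTheory.measureReal_def, hμπ, mul_comm]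
  have hsummable : Summable (fun p : ℤ × ℤ => ∫ θ, ‖Fc p θ‖ ∂μ) := by
    refine Summable.of_nonneg_of_le
      (fun p => MeasureTheory.integral_nonneg (fun θ => norm_nonneg _)) (fun p => hIb p) ?_
    have := (hB1.mul_of_nonneg hC1 (fun n => norm_nonneg _) (fun n => norm_nonneg _))
    exact this.mul_right (2 * MK * π) |>.congr fun p => by ring
  have HS := MeasureTheory.hasSum_integral_of_summable_integral_norm hFint hsummable
  have htsum : ∀ θ : ℝ, (∑' p : ℤ × ℤ, Fc p θ)
      = (farField B θ * farField C (-θ) + farField C θ * farField B (-θ)) * ((Ker θ : ℝ) : ℂ) :=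
    fun θ => ((G_hasSum B C hB1 hC1 θ).mul_right _).tsum_eq
  have hIval : ∀ p : ℤ × ℤ, (∫ θ, Fc p θ ∂μ)
      = B p.1 * C p.2 * ((π * ((if p.1 - p.2 ≤ (N:ℤ) - 1 then κ ^ (p.1 - p.2) else 0)
          + (if -(p.1 - p.2) ≤ (N:ℤ) - 1 then κ ^ (-(p.1 - p.2)) else 0)) : ℝ) : ℂ) := by
    intro p
    have hptw : ∀ θ : ℝ, Fc p θ
        = B p.1 * C p.2 * ((2 * Real.cos (((p.1 - p.2 : ℤ):ℝ) * θ) * Ker θ : ℝ) : ℂ) := by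
      intro θ
      rw [hFc]
      simp only
      have hswap : (p.2 - p.1 : ℤ) = -(p.1 - p.2) := by ring
      rw [hswap, exp_pair_eq (p.1 - p.2) θ]
      push_cast
      ring
    simp_rw [hptw]
    rw [MeasureTheory.integral_const_mul,
      show (∫ θ, ((2 * Real.cos (((p.1 - p.2 : ℤ):ℝ) * θ) * Ker θ : ℝ) : ℂ) ∂μ)
          = ((∫ θ, 2 * Real.cos (((p.1 - p.2 : ℤ):ℝ) * θ) * Ker θ ∂μ : ℝ) : ℂ)
        from integral_ofReal]
    congr 1
    apply Complex.ofReal_inj.mpr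
    rw [hμ, ← intervalIntegral.integral_of_le Real.pi_pos.le]
    simp only [hKer]
    exact integral_cos_kernel κ hκ N (p.1 - p.2)
  rw [intervalIntegral.integral_of_le Real.pi_pos.le]
  calc (∫ θ in Set.Ioc (0:ℝ) π,
        (farField B θ * farField C (-θ) + farField C θ * farField B (-θ)) * ((Ker θ : ℝ) : ℂ))
      = ∫ θ, (∑' p : ℤ × ℤ, Fc p θ) ∂μ := by
        rw [hμ]
        exact MeasureTheory.integral_congr_ae (Filter.Eventually.of_forall fun θ => (htsum θ).symm)
    _ = ∑' p : ℤ × ℤ, ∫ θ, Fc p θ ∂μ := HS.tsum_eq.symm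
    _ = _ := tsum_congr hIval

lemma zpow_pair (κ : ℝ) (k : ℤ) :
    κ ^ k + κ ^ (-k) = κ ^ (-(k.natAbs : ℤ)) + κ ^ (k.natAbs) := by
  have e : ∀ m : ℤ, m = (k.natAbs : ℤ) → κ ^ m = κ ^ (k.natAbs) := by
    intro m hm
    rw [hm, zpow_natCast]
  rcases Int.natAbs_eq k with h | h
  · rw [e k (by omega), show (-(k.natAbs : ℤ)) = -k by omega]
    ring
  · rw [e (-k) (by omega), show (-(k.natAbs : ℤ)) = k by omega]

set_option maxHeartbeats 1000000 in
/-- Second identity of Lemma 1: under the weighted summability hypotheses, the limit as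
`N → ∞` of `(κ^N/π) ∫₀^π G(θ) (κ cos((N-1)θ) - cos(Nθ))/(1 - 2κ cos θ + κ²) dθ` exists and
equals `∑_{m,n} κ^{-|m-n|} B_m C_n + ∑_{m,n} κ^{|m-n|} B_m C_n`. -/
theorem lemma1_second_identity (B C : ℤ → ℂ) (κ : ℝ) (hκ : 1 < κ)
    (hB : Summable fun n : ℤ => ‖B n‖ * κ ^ n.natAbs)
    (hC : Summable fun n : ℤ => ‖C n‖ * κ ^ n.natAbs)
    (fLT fTL : ℝ → ℂ) (hfLT : fLT = farField B) (hfTL : fTL = farField C)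
    (G : ℝ → ℂ) (hG : ∀ θ : ℝ, G θ = fLT θ * fTL (-θ) + fTL θ * fLT (-θ)) :
    Tendsto
      (fun N : ℕ =>
        ((κ ^ N / π : ℝ) : ℂ)
          * ∫ θ in (0 : ℝ)..π,
              G θ * (((κ * Real.cos (((N : ℝ) - 1) * θ) - Real.cos ((N : ℝ) * θ))
                  / (1 - 2 * κ * Real.cos θ + κ ^ 2) : ℝ) : ℂ))
      atTop
      (nhds ((∑' p : ℤ × ℤ, ((κ ^ (-((p.1 - p.2).natAbs : ℤ)) : ℝ) : ℂ) * B p.1 * C p.2)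
        + ∑' p : ℤ × ℤ, ((κ ^ ((p.1 - p.2).natAbs) : ℝ) : ℂ) * B p.1 * C p.2)) := by
  have hκ0 : (0:ℝ) < κ := lt_trans one_pos hκ
  have hB1 : Summable (fun n : ℤ => ‖B n‖) :=
    Summable.of_nonneg_of_le (fun n => norm_nonneg _)
      (fun n => le_mul_of_one_le_right (norm_nonneg _) (one_le_pow₀ hκ.le)) hB
  have hC1 : Summable (fun n : ℤ => ‖C n‖) :=
    Summable.of_nonneg_of_le (fun n => norm_nonneg _)
      (fun n => le_mul_of_one_le_right (norm_nonneg _) (one_le_pow₀ hκ.le)) hC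
  have hBC : Summable (fun p : ℤ × ℤ =>
      (‖B p.1‖ * κ ^ p.1.natAbs) * (‖C p.2‖ * κ ^ p.2.natAbs)) :=
    hB.mul_of_nonneg hC (fun n => by positivity) (fun n => by positivity)
  have hpowle : ∀ p : ℤ × ℤ, (κ:ℝ) ^ ((p.1 - p.2).natAbs) ≤ κ ^ p.1.natAbs * κ ^ p.2.natAbs := by
    intro p
    rw [← pow_add]
    exact pow_le_pow_right₀ hκ.le (Int.natAbs_sub_le p.1 p.2)
  set w : ℕ → ℤ → ℝ := fun N k => (if k ≤ (N:ℤ) - 1 then κ ^ k else 0)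
      + (if -k ≤ (N:ℤ) - 1 then κ ^ (-k) else 0) with hw
  have hzle : ∀ k : ℤ, (κ:ℝ) ^ k ≤ κ ^ k.natAbs := by
    intro k
    have h := zpow_le_zpow_right₀ hκ.le (Int.le_natAbs (a := k))
    rwa [zpow_natCast] at h
  have hzle' : ∀ k : ℤ, (κ:ℝ) ^ (-k) ≤ κ ^ k.natAbs := by
    intro k
    have h := zpow_le_zpow_right₀ hκ.le (show -k ≤ (k.natAbs : ℤ) by omega)
    rwa [zpow_natCast] at h
  have hwbound : ∀ N k, |w N k| ≤ 2 * κ ^ k.natAbs := by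
    intro N k
    rw [hw]
    simp only
    rw [_root_.abs_of_nonneg (by split_ifs <;> positivity)]
    have e1 : (if k ≤ (N:ℤ) - 1 then (κ:ℝ) ^ k else 0) ≤ κ ^ k.natAbs := by
      split_ifs
      · exact hzle k
      · positivity
    have e2 : (if -k ≤ (N:ℤ) - 1 then (κ:ℝ) ^ (-k) else 0) ≤ κ ^ k.natAbs := by
      split_ifs
      · exact hzle' k
      · positivity
    linarith
  have hGfar : ∀ θ : ℝ, G θ = farField B θ * farField C (-θ) + farField C θ * farField B (-θ) := by
    intro θ
    rw [hG θ, hfLT, hfTL]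
  -- closed form for the approximants
  have hAN : ∀ N : ℕ,
      ((κ ^ N / π : ℝ) : ℂ)
          * (∫ θ in (0 : ℝ)..π,
              G θ * (((κ * Real.cos (((N : ℝ) - 1) * θ) - Real.cos ((N : ℝ) * θ))
                  / (1 - 2 * κ * Real.cos θ + κ ^ 2) : ℝ) : ℂ))
        = ∑' p : ℤ × ℤ, B p.1 * C p.2 * ((w N (p.1 - p.2) : ℝ) : ℂ) := by
    intro N
    have key := integral_G_kernel B C κ hκ hB1 hC1 N
    have hrel : (∫ θ in (0 : ℝ)..π,
          (farField B θ * farField C (-θ) + farField C θ * farField B (-θ))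
            * ((κ ^ N * (κ * Real.cos (((N:ℝ) - 1) * θ) - Real.cos ((N:ℝ) * θ))
              / (1 - 2 * κ * Real.cos θ + κ ^ 2) : ℝ) : ℂ))
        = ((κ ^ N : ℝ) : ℂ) * ∫ θ in (0 : ℝ)..π,
            G θ * (((κ * Real.cos (((N : ℝ) - 1) * θ) - Real.cos ((N : ℝ) * θ))
                  / (1 - 2 * κ * Real.cos θ + κ ^ 2) : ℝ) : ℂ) := by
      rw [← intervalIntegral.integral_const_mul]
      apply intervalIntegral.integral_congr
      intro θ _
      dsimp only
      rw [hGfar θ]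
      push_cast
      ring
    rw [hrel] at key
    have hπ : (π:ℝ) ≠ 0 := Real.pi_ne_zero
    calc ((κ ^ N / π : ℝ) : ℂ) * (∫ θ in (0 : ℝ)..π,
            G θ * (((κ * Real.cos (((N : ℝ) - 1) * θ) - Real.cos ((N : ℝ) * θ))
                  / (1 - 2 * κ * Real.cos θ + κ ^ 2) : ℝ) : ℂ))
        = ((π⁻¹ : ℝ) : ℂ) * (((κ ^ N : ℝ) : ℂ) * ∫ θ in (0 : ℝ)..π,
            G θ * (((κ * Real.cos (((N : ℝ) - 1) * θ) - Real.cos ((N : ℝ) * θ))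
                  / (1 - 2 * κ * Real.cos θ + κ ^ 2) : ℝ) : ℂ)) := by
          push_cast
          ring
      _ = ((π⁻¹ : ℝ) : ℂ) * ∑' p : ℤ × ℤ, B p.1 * C p.2 * ((π * w N (p.1 - p.2) : ℝ) : ℂ) := by
          rw [key]
      _ = ∑' p : ℤ × ℤ, B p.1 * C p.2 * ((w N (p.1 - p.2) : ℝ) : ℂ) := by
          rw [← tsum_mul_left]
          apply tsum_congr
          intro p
          have hππ : ((π⁻¹:ℝ):ℂ) * ((π:ℝ):ℂ) = 1 := by
            rw [← Complex.ofReal_mul, inv_mul_cancel₀ Real.pi_ne_zero, Complex.ofReal_one]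
          rw [Complex.ofReal_mul]
          linear_combination B p.1 * C p.2 * ((w N (p.1 - p.2) : ℝ) : ℂ) * hππ
  -- summabilities for the two target series
  have hnorm2 : ∀ p : ℤ × ℤ, ‖((κ ^ ((p.1 - p.2).natAbs) : ℝ) : ℂ) * B p.1 * C p.2‖
      ≤ (‖B p.1‖ * κ ^ p.1.natAbs) * (‖C p.2‖ * κ ^ p.2.natAbs) := by
    intro p
    rw [norm_mul, norm_mul, Complex.norm_real, Real.norm_eq_abs,
      abs_of_pos (by positivity : (0:ℝ) < κ ^ ((p.1 - p.2).natAbs))]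
    have h := mul_le_mul_of_nonneg_right (hpowle p)
      (mul_nonneg (norm_nonneg (B p.1)) (norm_nonneg (C p.2)))
    calc κ ^ ((p.1 - p.2).natAbs) * ‖B p.1‖ * ‖C p.2‖
        = κ ^ ((p.1 - p.2).natAbs) * (‖B p.1‖ * ‖C p.2‖) := by ring
      _ ≤ (κ ^ p.1.natAbs * κ ^ p.2.natAbs) * (‖B p.1‖ * ‖C p.2‖) := h
      _ = (‖B p.1‖ * κ ^ p.1.natAbs) * (‖C p.2‖ * κ ^ p.2.natAbs) := by ring
  have hnorm1 : ∀ p : ℤ × ℤ, ‖((κ ^ (-((p.1 - p.2).natAbs : ℤ)) : ℝ) : ℂ) * B p.1 * C p.2‖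
      ≤ (‖B p.1‖ * κ ^ p.1.natAbs) * (‖C p.2‖ * κ ^ p.2.natAbs) := by
    intro p
    rw [norm_mul, norm_mul, Complex.norm_real, Real.norm_eq_abs,
      abs_of_pos (by positivity : (0:ℝ) < κ ^ (-(((p.1 - p.2).natAbs : ℤ))))]
    have hle : (κ:ℝ) ^ (-(((p.1 - p.2).natAbs : ℤ))) ≤ κ ^ ((p.1 - p.2).natAbs) := by
      have h := hzle' ((((p.1 - p.2).natAbs : ℤ)))
      rwa [Int.natAbs_natCast] at h
    refine le_trans ?_ (hnorm2 p)
    rw [norm_mul, norm_mul, Complex.norm_real, Real.norm_eq_abs,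
      abs_of_pos (by positivity : (0:ℝ) < κ ^ ((p.1 - p.2).natAbs))]
    have hn : (0:ℝ) ≤ ‖B p.1‖ * ‖C p.2‖ := by positivity
    calc κ ^ (-(((p.1 - p.2).natAbs : ℤ))) * ‖B p.1‖ * ‖C p.2‖
        = κ ^ (-(((p.1 - p.2).natAbs : ℤ))) * (‖B p.1‖ * ‖C p.2‖) := by ring
      _ ≤ κ ^ ((p.1 - p.2).natAbs) * (‖B p.1‖ * ‖C p.2‖) := mul_le_mul_of_nonneg_right hle hn
      _ = κ ^ ((p.1 - p.2).natAbs) * ‖B p.1‖ * ‖C p.2‖ := by ring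
  have hs1 : Summable (fun p : ℤ × ℤ =>
      ((κ ^ (-((p.1 - p.2).natAbs : ℤ)) : ℝ) : ℂ) * B p.1 * C p.2) :=
    Summable.of_norm (Summable.of_nonneg_of_le (fun p => norm_nonneg _) hnorm1 hBC)
  have hs2 : Summable (fun p : ℤ × ℤ =>
      ((κ ^ ((p.1 - p.2).natAbs) : ℝ) : ℂ) * B p.1 * C p.2) :=
    Summable.of_norm (Summable.of_nonneg_of_le (fun p => norm_nonneg _) hnorm2 hBC)
  have htarget : (∑' p : ℤ × ℤ, ((κ ^ (-((p.1 - p.2).natAbs : ℤ)) : ℝ) : ℂ) * B p.1 * C p.2)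
        + (∑' p : ℤ × ℤ, ((κ ^ ((p.1 - p.2).natAbs) : ℝ) : ℂ) * B p.1 * C p.2)
      = ∑' p : ℤ × ℤ, B p.1 * C p.2
          * ((κ ^ (-(((p.1 - p.2).natAbs : ℤ))) + κ ^ ((p.1 - p.2).natAbs) : ℝ) : ℂ) := by
    rw [← Summable.tsum_add hs1 hs2]
    apply tsum_congr
    intro p
    push_cast
    ring
  rw [htarget]
  have htend : Tendsto (fun N : ℕ => ∑' p : ℤ × ℤ, B p.1 * C p.2 * ((w N (p.1 - p.2) : ℝ) : ℂ))
      atTop (nhds (∑' p : ℤ × ℤ, B p.1 * C p.2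
        * ((κ ^ (-(((p.1 - p.2).natAbs : ℤ))) + κ ^ ((p.1 - p.2).natAbs) : ℝ) : ℂ))) := by
    apply tendsto_tsum_of_dominated_convergence
      (bound := fun p : ℤ × ℤ => 2 * ((‖B p.1‖ * κ ^ p.1.natAbs) * (‖C p.2‖ * κ ^ p.2.natAbs)))
    · exact hBC.mul_left 2
    · intro p
      have hwk : ∀ᶠ N : ℕ in atTop, B p.1 * C p.2
            * ((κ ^ (-(((p.1 - p.2).natAbs : ℤ))) + κ ^ ((p.1 - p.2).natAbs) : ℝ) : ℂ)
          = B p.1 * C p.2 * ((w N (p.1 - p.2) : ℝ) : ℂ) := by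
        rw [Filter.eventually_atTop]
        refine ⟨(p.1 - p.2).natAbs + 1, fun N hN => ?_⟩
        have h1 : p.1 - p.2 ≤ (N:ℤ) - 1 := by
          have := Int.le_natAbs (a := p.1 - p.2); omega
        have h2 : -(p.1 - p.2) ≤ (N:ℤ) - 1 := by
          have : -(p.1 - p.2) ≤ ((p.1 - p.2).natAbs : ℤ) := by omega
          omega
        have hwval : w N (p.1 - p.2)
            = κ ^ (-(((p.1 - p.2).natAbs : ℤ))) + κ ^ ((p.1 - p.2).natAbs) := by
          rw [hw]
          simp only [if_pos h1, if_pos h2]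
          exact zpow_pair κ (p.1 - p.2)
        rw [hwval]
      exact Tendsto.congr' hwk tendsto_const_nhds
    · refine Filter.Eventually.of_forall fun N p => ?_
      rw [norm_mul, norm_mul, Complex.norm_real, Real.norm_eq_abs]
      have h1 := hwbound N (p.1 - p.2)
      have h2 := mul_le_mul_of_nonneg_left h1
        (mul_nonneg (norm_nonneg (B p.1)) (norm_nonneg (C p.2)))
      have h3 := mul_le_mul_of_nonneg_left (hpowle p)
        (mul_nonneg (norm_nonneg (B p.1)) (norm_nonneg (C p.2)))
      calc ‖B p.1‖ * ‖C p.2‖ * |w N (p.1 - p.2)|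
          ≤ ‖B p.1‖ * ‖C p.2‖ * (2 * κ ^ ((p.1 - p.2).natAbs)) := h2
        _ = 2 * (‖B p.1‖ * ‖C p.2‖ * κ ^ ((p.1 - p.2).natAbs)) := by ring
        _ ≤ 2 * (‖B p.1‖ * ‖C p.2‖ * (κ ^ p.1.natAbs * κ ^ p.2.natAbs)) := by linarith
        _ = 2 * ((‖B p.1‖ * κ ^ p.1.natAbs) * (‖C p.2‖ * κ ^ p.2.natAbs)) := by ring
  exact htend.congr fun N => (hAN N).symm
end
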